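/- Every extreme point of the polyhedron D = {d ∈ ℝ^n : ⟨d, 1⟩ = 0, ‖d‖₁ ≤ 1} has exactly two non-zero entries. -/

import Mathlib

private lemma sum_split {n : ℕ} {i j : Fin n} (hij : i ≠ j) (f : Fin n → ℝ) :
    ∑ k, f k = f i + (f j + ∑ k ∈ (Finset.univ.erase i).erase j, f k) := by
  rw [Finset.add_sum_erase _ f (by simp [Finset.mem_erase, hij.symm]),
    Finset.add_sum_erase _ f (Finset.mem_univ i)]

private lemma key {n : ℕ} (d : Fin n → ℝ)
    (hd : ∑ i, d i = 0 ∧ ∑ i, |d i| ≤ 1)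
    (hext : ∀ d' d'' : Fin n → ℝ,
      (∑ i, d' i = 0 ∧ ∑ i, |d' i| ≤ 1) → (∑ i, d'' i = 0 ∧ ∑ i, |d'' i| ≤ 1) →
      d = (1 / 2 : ℝ) • d' + (1 / 2 : ℝ) • d'' → d' = d'')
    {i j : Fin n} (hij : i ≠ j) (hi : 0 < d i) (hj : 0 < d j) : False := by
  classical
  set ε := min (d i) (d j) with hε
  have hε0 : 0 < ε := lt_min hi hj
  have hεi : ε ≤ d i := min_le_left _ _
  have hεj : ε ≤ d j := min_le_right _ _
  set e : Fin n → ℝ := fun k => if k = i then ε else if k = j then -ε else 0 with he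
  have hei : e i = ε := by simp [he]
  have hej : e j = -ε := by simp [he, hij.symm]
  have herest : ∀ k, k ≠ i → k ≠ j → e k = 0 := by
    intro k h1 h2; simp [he, h1, h2]
  have hesum : ∑ k, e k = 0 := by
    rw [sum_split hij e, hei, hej]
    have : ∑ k ∈ (Finset.univ.erase i).erase j, e k = 0 := by
      refine Finset.sum_eq_zero fun k hk => ?_
      simp only [Finset.mem_erase] at hk
      exact herest k hk.2.1 hk.1
    rw [this]; ring
  have hmem : ∀ s : ℝ, |s| ≤ 1 →
      (∑ k, (d k + s * e k) = 0) ∧ (∑ k, |d k + s * e k| ≤ 1) := by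
    intro s hs
    rw [abs_le] at hs
    constructor
    · rw [Finset.sum_add_distrib, ← Finset.mul_sum, hesum, hd.1]; ring
    · have h1 : |d i + s * e i| = d i + s * ε := by
        rw [hei, abs_of_nonneg (by nlinarith [hs.1, hs.2])]
      have h2 : |d j + s * e j| = d j - s * ε := by
        rw [hej, show d j + s * -ε = d j - s * ε by ring,
          abs_of_nonneg (by nlinarith [hs.1, hs.2])]
      rw [sum_split hij (fun k => |d k + s * e k|), h1, h2]
      have h3 : ∑ k ∈ (Finset.univ.erase i).erase j, |d k + s * e k|
          = ∑ k ∈ (Finset.univ.erase i).erase j, |d k| := by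
        refine Finset.sum_congr rfl fun k hk => ?_
        simp only [Finset.mem_erase] at hk
        rw [herest k hk.2.1 hk.1]; ring_nf
      rw [h3]
      have h4 := sum_split hij (fun k => |d k|)
      rw [abs_of_pos hi, abs_of_pos hj] at h4
      have := hd.2
      rw [h4] at this
      linarith
  have h1 := hmem 1 (by norm_num)
  have h2 := hmem (-1) (by norm_num)
  have heq : d = (1 / 2 : ℝ) • (fun k => d k + 1 * e k)
      + (1 / 2 : ℝ) • (fun k => d k + (-1) * e k) := by
    funext k
    simp only [Pi.add_apply, Pi.smul_apply, smul_eq_mul]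
    ring
  have := hext _ _ h1 h2 heq
  have := congrFun this i
  simp only [hei] at this
  nlinarith [hε0]

private lemma key' {n : ℕ} (d : Fin n → ℝ)
    (hd : ∑ i, d i = 0 ∧ ∑ i, |d i| ≤ 1)
    (hext : ∀ d' d'' : Fin n → ℝ,
      (∑ i, d' i = 0 ∧ ∑ i, |d' i| ≤ 1) → (∑ i, d'' i = 0 ∧ ∑ i, |d'' i| ≤ 1) →
      d = (1 / 2 : ℝ) • d' + (1 / 2 : ℝ) • d'' → d' = d'')
    {i j : Fin n} (hij : i ≠ j) (hi : d i < 0) (hj : d j < 0) : False := by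
  refine key (fun k => -(d k)) ⟨by simp [hd.1], by simpa using hd.2⟩ ?_ hij
    (by simpa using hi) (by simpa using hj)
  intro d' d'' h1 h2 heq
  have := hext (fun k => -(d' k)) (fun k => -(d'' k))
    ⟨by simp [h1.1], by simpa using h1.2⟩ ⟨by simp [h2.1], by simpa using h2.2⟩ ?_
  · funext k
    have := congrFun this k
    linarith
  · funext k
    have := congrFun heq k
    simp only [Pi.add_apply, Pi.smul_apply, smul_eq_mul] at this ⊢
    linarith

/-- Every extreme point of `D = {d : ⟨d,1⟩ = 0, ‖d‖₁ ≤ 1}` (a point of `D`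
that cannot be written as `(1/2)d' + (1/2)d''` with `d' ≠ d''` both in `D`) has exactly
two non-zero entries (for `n ≥ 2`). -/
theorem stmt_3 {n : ℕ} (hn : 2 ≤ n) (d : Fin n → ℝ)
    (hd : ∑ i, d i = 0 ∧ ∑ i, |d i| ≤ 1)
    (hext : ∀ d' d'' : Fin n → ℝ,
      (∑ i, d' i = 0 ∧ ∑ i, |d' i| ≤ 1) → (∑ i, d'' i = 0 ∧ ∑ i, |d'' i| ≤ 1) →
      d = (1 / 2 : ℝ) • d' + (1 / 2 : ℝ) • d'' → d' = d'') :
    {i | d i ≠ 0}.ncard = 2 := by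
  classical
  have hsame : ∀ i j : Fin n, i ≠ j → d i ≠ 0 → d j ≠ 0 →
      ¬(0 < d i ∧ 0 < d j) ∧ ¬(d i < 0 ∧ d j < 0) := by
    intro i j hij hi hj
    exact ⟨fun h => key d hd hext hij h.1 h.2, fun h => key' d hd hext hij h.1 h.2⟩
  -- d ≠ 0
  have hne : ∃ i, d i ≠ 0 := by
    by_contra h
    push_neg at h
    set i : Fin n := ⟨0, by omega⟩ with hi
    set j : Fin n := ⟨1, by omega⟩ with hj
    have hij : i ≠ j := by simp [hi, hj, Fin.ext_iff]
    set e : Fin n → ℝ := fun k => if k = i then (1/2 : ℝ) else if k = j then -(1/2) else 0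
      with he'
    have hrest : ∀ k, k ≠ i → k ≠ j → e k = 0 := by
      intro k h1 h2; simp [he', h1, h2]
    have h0 : ∑ k ∈ (Finset.univ.erase i).erase j, e k = 0 := by
      refine Finset.sum_eq_zero fun k hk => ?_
      simp only [Finset.mem_erase] at hk
      exact hrest k hk.2.1 hk.1
    have h0' : ∑ k ∈ (Finset.univ.erase i).erase j, |e k| = 0 := by
      refine Finset.sum_eq_zero fun k hk => ?_
      simp only [Finset.mem_erase] at hk
      rw [hrest k hk.2.1 hk.1, abs_zero]
    have hesum : ∑ k, e k = 0 := by
      rw [sum_split hij e, h0]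
      simp [he', hij.symm]
    have heabs : ∑ k, |e k| ≤ 1 := by
      rw [sum_split hij (fun k => |e k|), h0']
      simp [he', hij.symm]
      norm_num
    have hmesum : ∑ k, -(e k) = 0 := by simp [hesum]
    have hmeabs : ∑ k, |-(e k)| ≤ 1 := by simpa using heabs
    have heq : d = (1 / 2 : ℝ) • e + (1 / 2 : ℝ) • (fun k => -(e k)) := by
      funext k
      simp only [Pi.add_apply, Pi.smul_apply, smul_eq_mul, h k]
      ring
    have := hext e (fun k => -(e k)) ⟨hesum, heabs⟩ ⟨hmesum, hmeabs⟩ heq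
    have := congrFun this i
    simp only [he', if_pos rfl] at this
    norm_num at this
  obtain ⟨i, hi⟩ := hne
  have hj : ∃ j, j ≠ i ∧ d j ≠ 0 := by
    by_contra h
    push_neg at h
    have : ∑ k, d k = d i := by
      exact Finset.sum_eq_single i (fun b _ hb => h b hb) (fun hb => absurd (Finset.mem_univ i) hb)
    rw [hd.1] at this
    exact hi this.symm
  obtain ⟨j, hji, hj⟩ := hj
  have hfin : {i | d i ≠ 0}.Finite := Set.toFinite _
  rw [Set.ncard_eq_toFinset_card _ hfin]
  have hmem : ∀ k, k ∈ hfin.toFinset ↔ d k ≠ 0 := by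
    intro k; rw [Set.Finite.mem_toFinset]; rfl
  have hlow : 1 < hfin.toFinset.card := by
    rw [Finset.one_lt_card]
    exact ⟨i, (hmem i).2 hi, j, (hmem j).2 hj, fun h => hji h.symm⟩
  have hhigh : ¬(2 < hfin.toFinset.card) := by
    intro h
    rw [Finset.two_lt_card_iff] at h
    obtain ⟨a, b, c, ha, hb, hc, hab, hac, hbc⟩ := h
    rw [hmem] at ha hb hc
    rcases ha.lt_or_gt with ha' | ha' <;> rcases hb.lt_or_gt with hb' | hb' <;>
      rcases hc.lt_or_gt with hc' | hc' <;>
      first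
        | exact (hsame a b hab ha hb).1 ⟨ha', hb'⟩
        | exact (hsame a c hac ha hc).1 ⟨ha', hc'⟩
        | exact (hsame b c hbc hb hc).1 ⟨hb', hc'⟩
        | exact (hsame a b hab ha hb).2 ⟨ha', hb'⟩
        | exact (hsame a c hac ha hc).2 ⟨ha', hc'⟩
        | exact (hsame b c hbc hb hc).2 ⟨hb', hc'⟩
  omega
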